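/- Let G be a finite connected graph on V with |V| = n, f, g : V → ℝ, and let p be the uniform distribution on V. Then (∑_{v,w} |W_f(v,w) − W_g(v,w)|^q p(v)p(w))^{1/q} ≤ n^{1/q} · (∑_u |f(u) − g(u)|^q p(u))^{1/q}, where W_f, W_g are the minimax path matrices of f and g. -/

import Mathlib

open Finset

/-- The maximum value of `f` along the support of a walk. -/
def walkMax {V : Type*} (G : SimpleGraph V) (f : V → ℝ) {v w : V}
    (p : G.Walk v w) : ℝ :=
  p.support.foldr (fun u r => max (f u) r) (f v)

/-- The minimax path matrix `W_f(v,w)`: the minimum over edge paths from `v`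
to `w` of the maximum `f`-value along the path. -/
noncomputable def minimaxW {V : Type*} (G : SimpleGraph V) (f : V → ℝ)
    (v w : V) : ℝ :=
  sInf {x | ∃ p : G.Walk v w, x = walkMax G f p}

private lemma foldr_max_mono {V : Type*} (f g : V → ℝ) (M : ℝ)
    (h : ∀ u, f u ≤ g u + M) :
    ∀ (l : List V) (b c : ℝ), b ≤ c + M →
      l.foldr (fun u r => max (f u) r) b ≤ l.foldr (fun u r => max (g u) r) c + M := by
  intro l
  induction l with
  | nil => intro b c hbc; simpa using hbc
  | cons a l ih =>
    intro b c hbc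
    simp only [List.foldr_cons]
    rw [← max_add_add_right]
    exact max_le_max (h a) (ih b c hbc)

private lemma le_foldr_max {V : Type*} (f : V → ℝ) :
    ∀ (l : List V) (b : ℝ), b ≤ l.foldr (fun u r => max (f u) r) b := by
  intro l
  induction l with
  | nil => intro b; simp
  | cons a l ih => intro b; exact (ih b).trans (le_max_right _ _)

private lemma minimaxW_le_of_le {V : Type*} (G : SimpleGraph V) (hG : G.Connected)
    (f g : V → ℝ) (M : ℝ) (h : ∀ u, f u ≤ g u + M) (v w : V) :
    minimaxW G f v w ≤ minimaxW G g v w + M := by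
  obtain ⟨p0⟩ := hG.preconnected v w
  have hSgne : {x | ∃ p : G.Walk v w, x = walkMax G g p}.Nonempty :=
    ⟨walkMax G g p0, p0, rfl⟩
  have hbdd : BddBelow {x | ∃ p : G.Walk v w, x = walkMax G f p} := by
    refine ⟨f v, ?_⟩
    rintro x ⟨p, rfl⟩
    exact le_foldr_max f _ _
  rw [minimaxW, minimaxW, ← sub_le_iff_le_add]
  apply le_csInf hSgne
  rintro x ⟨p, rfl⟩
  rw [sub_le_iff_le_add]
  refine (csInf_le hbdd ⟨p, rfl⟩).trans ?_
  exact foldr_max_mono f g M h _ _ _ (h v)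

private lemma abs_minimaxW_sub_le {V : Type*} (G : SimpleGraph V) (hG : G.Connected)
    (f g : V → ℝ) (M : ℝ) (h : ∀ u, |f u - g u| ≤ M) (v w : V) :
    |minimaxW G f v w - minimaxW G g v w| ≤ M := by
  rw [abs_sub_le_iff]
  constructor
  · rw [sub_le_iff_le_add']
    exact minimaxW_le_of_le G hG f g M
      (fun u => by have := (abs_sub_le_iff.mp (h u)).1; linarith) v w
  · rw [sub_le_iff_le_add']
    exact minimaxW_le_of_le G hG g f M
      (fun u => by have := (abs_sub_le_iff.mp (h u)).2; linarith) v w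

/-- GW-type stability bound for the uniform distribution with the
improved constant `n^{1/q}`. -/
theorem minimaxW_Lq_stability_uniform {V : Type*} [Fintype V] [Nonempty V]
    (G : SimpleGraph V) (hG : G.Connected) (f g : V → ℝ) (q : ℝ) (hq : 1 ≤ q)
    (p : V → ℝ) (hp : ∀ v : V, p v = 1 / (Fintype.card V : ℝ)) :
    (∑ v, ∑ w, |minimaxW G f v w - minimaxW G g v w| ^ q * (p v * p w)) ^ (1 / q) ≤
      (Fintype.card V : ℝ) ^ ((1 : ℝ) / q) *
        (∑ u, |f u - g u| ^ q * p u) ^ (1 / q) := by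
  have hq0 : (0 : ℝ) < q := lt_of_lt_of_le one_pos hq
  have hq0' : q ≠ 0 := ne_of_gt hq0
  have hn0 : (0 : ℝ) < (Fintype.card V : ℝ) := by
    exact_mod_cast Fintype.card_pos
  obtain ⟨u0, _, hu0⟩ := Finset.exists_max_image (univ : Finset V)
    (fun u => |f u - g u|) univ_nonempty
  set M : ℝ := |f u0 - g u0| with hM
  have hM0 : 0 ≤ M := abs_nonneg _
  have hle : ∀ v w, |minimaxW G f v w - minimaxW G g v w| ≤ M :=
    abs_minimaxW_sub_le G hG f g M (fun u => hu0 u (mem_univ u))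
  -- bound the LHS sum by M^q
  have hLHSsum : (∑ v, ∑ w, |minimaxW G f v w - minimaxW G g v w| ^ q * (p v * p w))
      ≤ M ^ q := by
    have : ∀ v w : V, |minimaxW G f v w - minimaxW G g v w| ^ q * (p v * p w)
        ≤ M ^ q * (p v * p w) := by
      intro v w
      apply mul_le_mul_of_nonneg_right
      · exact Real.rpow_le_rpow (abs_nonneg _) (hle v w) (le_of_lt hq0)
      · rw [hp v, hp w]; positivity
    calc (∑ v, ∑ w, |minimaxW G f v w - minimaxW G g v w| ^ q * (p v * p w))
        ≤ ∑ v : V, ∑ w : V, M ^ q * (p v * p w) := by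
          apply Finset.sum_le_sum; intro v _
          exact Finset.sum_le_sum (fun w _ => this v w)
      _ = M ^ q := by
          simp only [hp, Finset.sum_const, card_univ, nsmul_eq_mul]
          field_simp
  have hLHSnn : (0 : ℝ) ≤ ∑ v, ∑ w, |minimaxW G f v w - minimaxW G g v w| ^ q * (p v * p w) := by
    apply Finset.sum_nonneg; intro v _
    apply Finset.sum_nonneg; intro w _
    have : 0 ≤ p v * p w := by rw [hp v, hp w]; positivity
    positivity
  have hLHS : (∑ v, ∑ w, |minimaxW G f v w - minimaxW G g v w| ^ q * (p v * p w)) ^ (1 / q)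
      ≤ M := by
    calc _ ≤ (M ^ q) ^ (1 / q) :=
          Real.rpow_le_rpow hLHSnn hLHSsum (by positivity)
      _ = M := by
          rw [← Real.rpow_mul hM0, mul_one_div_cancel hq0', Real.rpow_one]
  have hRHS : M ≤ (Fintype.card V : ℝ) ^ ((1 : ℝ) / q) *
      (∑ u, |f u - g u| ^ q * p u) ^ (1 / q) := by
    have hsum : M ^ q * (1 / (Fintype.card V : ℝ)) ≤ ∑ u, |f u - g u| ^ q * p u := by
      have := Finset.single_le_sum (f := fun u => |f u - g u| ^ q * p u)
        (fun u _ => by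
          have h1 : (0:ℝ) ≤ |f u - g u| ^ q := Real.rpow_nonneg (abs_nonneg _) q
          have h2 : (0:ℝ) ≤ p u := by rw [hp u]; positivity
          positivity) (mem_univ u0)
      simpa only [hp u0] using this
    have hstep : (M ^ q * (1 / (Fintype.card V : ℝ))) ^ (1 / q)
        ≤ (∑ u, |f u - g u| ^ q * p u) ^ (1 / q) :=
      Real.rpow_le_rpow (by positivity) hsum (by positivity)
    have heq : (Fintype.card V : ℝ) ^ ((1 : ℝ) / q) *
        (M ^ q * (1 / (Fintype.card V : ℝ))) ^ (1 / q) = M := by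
      rw [Real.mul_rpow (by positivity) (by positivity),
        ← Real.rpow_mul hM0, mul_one_div_cancel hq0', Real.rpow_one,
        ← mul_assoc, mul_comm ((Fintype.card V : ℝ) ^ ((1:ℝ)/q)) M, mul_assoc,
        ← Real.mul_rpow (le_of_lt hn0) (by positivity)]
      rw [mul_one_div, div_self (ne_of_gt hn0), Real.one_rpow, mul_one]
    calc M = (Fintype.card V : ℝ) ^ ((1 : ℝ) / q) *
          (M ^ q * (1 / (Fintype.card V : ℝ))) ^ (1 / q) := heq.symm
      _ ≤ _ := by
          apply mul_le_mul_of_nonneg_left hstep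
          positivity
  exact hLHS.trans hRHS
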